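/- arXiv:1406.4452 — 2 statements merged into one kernel-verified Lean document; each statement's English description precedes it below -/
import Mathlib

section
/- Let U : [0,∞) → ℝ be twice continuously differentiable with U'' bounded, α > 0, and c ∈ ℂ with Im c ≠ 0. Let φ : [0,∞) → ℂ be a twice continuously differentiable solution of the Rayleigh equation (U − c)(φ'' − α²φ) = U''φ on (0,∞) with φ(0) = 0, φ(Z) → 0 as Z → ∞, φ, φ' ∈ L²(0,∞), and φ'(Z)·conj(φ(Z)) → 0 as Z → ∞. Then (Im c) · ∫₀^∞ (U''(Z)/|U(Z) − c|²) |φ(Z)|² dZ = 0. -/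
open MeasureTheory Filter Set

/-- Imaginary part of the Rayleigh energy identity:
`Im c · ∫ (U''/|U - c|²) |φ|² = 0`. -/
theorem rayleigh_imaginary_part_identity
    (U : ℝ → ℝ) (α : ℝ) (c : ℂ) (φ : ℝ → ℂ)
    (hU : ContDiff ℝ 2 U)
    (hU2 : ∃ M : ℝ, ∀ Z : ℝ, 0 ≤ Z → |deriv (deriv U) Z| ≤ M)
    (hα : 0 < α)
    (hφ : ContDiff ℝ 2 φ)
    (hray : ∀ Z ∈ Ioi (0:ℝ),
      (Complex.ofReal (U Z) - c) * (deriv (deriv φ) Z - (α : ℂ)^2 * φ Z)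
        = Complex.ofReal (deriv (deriv U) Z) * φ Z)
    (hφ0 : φ 0 = 0)
    (hφ_inf : Tendsto φ atTop (nhds 0))
    (hφL2 : IntegrableOn (fun Z => ‖φ Z‖^2) (Ioi 0))
    (hφdL2 : IntegrableOn (fun Z => ‖deriv φ Z‖^2) (Ioi 0))
    (hcross : Tendsto (fun Z => deriv φ Z * (starRingEnd ℂ) (φ Z)) atTop (nhds 0))
    (hc : c.im ≠ 0) :
    c.im * ∫ Z in Ioi (0:ℝ),
        (deriv (deriv U) Z / ‖Complex.ofReal (U Z) - c‖^2) * ‖φ Z‖^2 = 0 := by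
  obtain ⟨M, hM⟩ := hU2
  -- nonvanishing of U - c
  have hne : ∀ Z : ℝ, (Complex.ofReal (U Z) - c) ≠ 0 := by
    intro Z h
    apply hc
    have : (Complex.ofReal (U Z) - c).im = 0 := by rw [h]; rfl
    simpa using this.symm
  have habs_pos : ∀ Z : ℝ, 0 < ‖Complex.ofReal (U Z) - c‖ := by
    intro Z; exact norm_pos_iff.mpr (hne Z)
  have habs_ge : ∀ Z : ℝ, |c.im| ≤ ‖Complex.ofReal (U Z) - c‖ := by
    intro Z
    have := Complex.abs_im_le_norm (Complex.ofReal (U Z) - c)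
    simpa using this
  -- continuity facts
  have hUc : Continuous U := hU.continuous
  have hU2c : Continuous (deriv (deriv U)) := by
    have h1 : ContDiff ℝ 1 (deriv U) := by
      have : ContDiff ℝ ((1 : ℕ) + 1) U := by exact_mod_cast hU
      exact (contDiff_succ_iff_deriv.mp this).2.2
    have : ContDiff ℝ ((0 : ℕ) + 1) (deriv U) := by exact_mod_cast h1
    exact ((contDiff_succ_iff_deriv.mp this).2.2).continuous
  have hφc : Continuous φ := hφ.continuous
  have hφ'c : ContDiff ℝ 1 (deriv φ) := by
    have : ContDiff ℝ ((1 : ℕ) + 1) φ := by exact_mod_cast hφ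
    exact (contDiff_succ_iff_deriv.mp this).2.2
  have hφ''c : Continuous (deriv (deriv φ)) := by
    have : ContDiff ℝ ((0 : ℕ) + 1) (deriv φ) := by exact_mod_cast hφ'c
    exact ((contDiff_succ_iff_deriv.mp this).2.2).continuous
  have hφdiff : Differentiable ℝ φ := hφ.differentiable (by norm_num)
  have hφ'diff : Differentiable ℝ (deriv φ) := hφ'c.differentiable (by norm_num)
  -- the key complex function
  set g : ℝ → ℂ := fun Z =>
    (Complex.ofReal (deriv (deriv U) Z) / (Complex.ofReal (U Z) - c)) *
      Complex.ofReal (‖φ Z‖ ^ 2) with hg_def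
  have hg_cont : Continuous g := by
    apply Continuous.mul
    · exact (Complex.continuous_ofReal.comp hU2c).div
        ((Complex.continuous_ofReal.comp hUc).sub continuous_const) hne
    · exact Complex.continuous_ofReal.comp ((hφc.norm).pow 2)
  -- integrability of g on Ioi 0
  have hg_int : IntegrableOn g (Ioi 0) := by
    apply Integrable.mono' (g := fun Z => (M / |c.im|) * ‖φ Z‖ ^ 2)
      (hφL2.const_mul _) (hg_cont.aestronglyMeasurable.restrict)
    filter_upwards [ae_restrict_mem measurableSet_Ioi] with Z hZ
    have hZ0 : (0:ℝ) ≤ Z := le_of_lt hZ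
    have h1 : ‖g Z‖ = |deriv (deriv U) Z| / ‖Complex.ofReal (U Z) - c‖
        * ‖φ Z‖ ^ 2 := by
      simp [hg_def, Complex.norm_real, abs_of_nonneg (sq_nonneg ‖φ Z‖),
        norm_div, norm_mul]
    rw [h1]
    have hM0 : 0 ≤ M := le_trans (abs_nonneg _) (hM Z hZ0)
    have hb : |deriv (deriv U) Z| / ‖Complex.ofReal (U Z) - c‖
        ≤ M / |c.im| :=
      div_le_div₀ hM0 (hM Z hZ0) (abs_pos.mpr hc) (habs_ge Z)
    exact mul_le_mul_of_nonneg_right hb (sq_nonneg _)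
  -- pointwise identity on Ioi 0 : φ'' * conj φ = α² * |φ|² + g
  have hpt : ∀ Z ∈ Ioi (0:ℝ),
      deriv (deriv φ) Z * (starRingEnd ℂ) (φ Z)
        = (α:ℂ)^2 * Complex.ofReal (‖φ Z‖^2) + g Z := by
    intro Z hZ
    have h := hray Z hZ
    have hw := hne Z
    have h2 : deriv (deriv φ) Z =
        (α:ℂ)^2 * φ Z +
        (Complex.ofReal (deriv (deriv U) Z) / (Complex.ofReal (U Z) - c)) * φ Z := by
      field_simp at h ⊢
      linear_combination h
    calc deriv (deriv φ) Z * (starRingEnd ℂ) (φ Z)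
        = (α:ℂ)^2 * (φ Z * (starRingEnd ℂ) (φ Z)) +
          (Complex.ofReal (deriv (deriv U) Z) / (Complex.ofReal (U Z) - c)) *
            (φ Z * (starRingEnd ℂ) (φ Z)) := by rw [h2]; ring
      _ = _ := by rw [Complex.mul_conj']; push_cast [hg_def]; ring
  -- f1 := φ'' conj φ,  f2 := φ' conj φ'
  set f1 : ℝ → ℂ := fun Z => deriv (deriv φ) Z * (starRingEnd ℂ) (φ Z) with hf1_def
  set f2 : ℝ → ℂ := fun Z => deriv φ Z * (starRingEnd ℂ) (deriv φ Z) with hf2_def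
  have hf2_eq : f2 = fun Z => (Complex.ofReal (‖deriv φ Z‖^2)) := by
    funext Z; rw [hf2_def]; push_cast [Complex.mul_conj']; ring
  have hf2_int : IntegrableOn f2 (Ioi 0) := by
    rw [hf2_eq]; exact hφdL2.ofReal
  have hf1_int : IntegrableOn f1 (Ioi 0) := by
    apply IntegrableOn.congr_fun (f := fun Z => (α:ℂ)^2 * Complex.ofReal (‖φ Z‖^2) + g Z)
    · exact (hφL2.ofReal.const_mul _).add hg_int
    · intro Z hZ; exact (hpt Z hZ).symm
    · exact measurableSet_Ioi
  -- integration by parts on [0, T]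
  have hibp : ∀ T : ℝ, (∫ Z in (0:ℝ)..T, (f1 Z + f2 Z))
      = deriv φ T * (starRingEnd ℂ) (φ T) := by
    intro T
    have hu : ∀ x ∈ uIcc (0:ℝ) T, HasDerivAt (deriv φ) (deriv (deriv φ) x) x :=
      fun x _ => (hφ'diff x).hasDerivAt
    have hv : ∀ x ∈ uIcc (0:ℝ) T,
        HasDerivAt (fun y => (starRingEnd ℂ) (φ y)) ((starRingEnd ℂ) (deriv φ x)) x :=
      fun x _ => ((hφdiff x).hasDerivAt).star
    have hu' : IntervalIntegrable (deriv (deriv φ)) volume 0 T :=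
      hφ''c.intervalIntegrable 0 T
    have hv' : IntervalIntegrable (fun x => (starRingEnd ℂ) (deriv φ x)) volume 0 T :=
      (Complex.continuous_conj.comp hφ'c.continuous).intervalIntegrable 0 T
    have := intervalIntegral.integral_deriv_mul_eq_sub hu hv hu' hv'
    simpa [hf1_def, hf2_def, hφ0] using this
  -- limits as T → ∞
  have hlim1 : Tendsto (fun T => ∫ Z in (0:ℝ)..T, f1 Z) atTop
      (nhds (∫ Z in Ioi (0:ℝ), f1 Z)) :=
    intervalIntegral_tendsto_integral_Ioi 0 hf1_int tendsto_id
  have hlim2 : Tendsto (fun T => ∫ Z in (0:ℝ)..T, f2 Z) atTop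
      (nhds (∫ Z in Ioi (0:ℝ), f2 Z)) :=
    intervalIntegral_tendsto_integral_Ioi 0 hf2_int tendsto_id
  have hsum_eq : (∫ Z in Ioi (0:ℝ), f1 Z) + (∫ Z in Ioi (0:ℝ), f2 Z) = 0 := by
    have h1 : Tendsto (fun T => (∫ Z in (0:ℝ)..T, f1 Z) + (∫ Z in (0:ℝ)..T, f2 Z)) atTop
        (nhds ((∫ Z in Ioi (0:ℝ), f1 Z) + (∫ Z in Ioi (0:ℝ), f2 Z))) := hlim1.add hlim2
    have h2 : Tendsto (fun T => (∫ Z in (0:ℝ)..T, f1 Z) + (∫ Z in (0:ℝ)..T, f2 Z)) atTop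
        (nhds 0) := by
      have heq : ∀ T : ℝ, (∫ Z in (0:ℝ)..T, f1 Z) + (∫ Z in (0:ℝ)..T, f2 Z)
          = deriv φ T * (starRingEnd ℂ) (φ T) := by
        intro T
        rw [← hibp T]
        exact (intervalIntegral.integral_add
          ((hφ''c.mul (Complex.continuous_conj.comp hφc)).intervalIntegrable 0 T)
          ((hφ'c.continuous.mul
            (Complex.continuous_conj.comp hφ'c.continuous)).intervalIntegrable 0 T)).symm
      simp only [heq]
      exact hcross
    exact tendsto_nhds_unique h1 h2
  -- compute ∫ f1
  have hint_f1 : (∫ Z in Ioi (0:ℝ), f1 Z)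
      = (α:ℂ)^2 * Complex.ofReal (∫ Z in Ioi (0:ℝ), ‖φ Z‖^2)
        + ∫ Z in Ioi (0:ℝ), g Z := by
    rw [setIntegral_congr_fun measurableSet_Ioi hpt]
    have hint1 : Integrable (fun Z => (α:ℂ)^2 * Complex.ofReal (‖φ Z‖^2))
        (volume.restrict (Ioi 0)) := hφL2.ofReal.const_mul _
    rw [integral_add hint1 hg_int, integral_const_mul]
    have : (∫ Z in Ioi (0:ℝ), (Complex.ofReal (‖φ Z‖^2)))
        = Complex.ofReal (∫ Z in Ioi (0:ℝ), ‖φ Z‖^2) := integral_ofReal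
    rw [this]
  have hint_f2 : (∫ Z in Ioi (0:ℝ), f2 Z)
      = Complex.ofReal (∫ Z in Ioi (0:ℝ), ‖deriv φ Z‖^2) := by
    rw [hf2_eq]
    exact integral_ofReal
  -- the imaginary part of ∫ g is zero
  have hIg : (∫ Z in Ioi (0:ℝ), g Z).im = 0 := by
    have hI : (∫ Z in Ioi (0:ℝ), g Z)
        = - Complex.ofReal (∫ Z in Ioi (0:ℝ), ‖deriv φ Z‖^2)
          - (α:ℂ)^2 * Complex.ofReal (∫ Z in Ioi (0:ℝ), ‖φ Z‖^2) := by
      rw [← hint_f2]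
      linear_combination hsum_eq - hint_f1
    rw [hI]
    simp [Complex.sub_im, Complex.neg_im, Complex.mul_im, Complex.ofReal_im,
      ← Complex.ofReal_pow]
  -- compute the imaginary part of g pointwise
  have hg_im : ∀ Z : ℝ, (g Z).im
      = c.im * ((deriv (deriv U) Z / ‖Complex.ofReal (U Z) - c‖^2) * ‖φ Z‖^2) := by
    intro Z
    rw [hg_def]
    simp only [div_eq_mul_inv]
    rw [Complex.mul_im, Complex.mul_im]
    have h1 : (Complex.ofReal (deriv (deriv U) Z)).im = 0 := Complex.ofReal_im _
    have h2 : (Complex.ofReal (‖φ Z‖^2)).im = 0 := Complex.ofReal_im _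
    have h3 : ((Complex.ofReal (U Z) - c)⁻¹).im
        = c.im / ‖Complex.ofReal (U Z) - c‖^2 := by
      rw [Complex.inv_im, Complex.sq_norm]
      simp
    have h4 : (Complex.ofReal (‖φ Z‖^2)).re = ‖φ Z‖^2 := Complex.ofReal_re _
    have h5 : (Complex.ofReal (deriv (deriv U) Z)).re = deriv (deriv U) Z :=
      Complex.ofReal_re _
    rw [h1, h2, h3, h4, h5]
    ring
  -- conclude
  have : c.im * ∫ Z in Ioi (0:ℝ),
      (deriv (deriv U) Z / ‖Complex.ofReal (U Z) - c‖^2) * ‖φ Z‖^2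
      = ∫ Z in Ioi (0:ℝ), (g Z).im := by
    rw [← integral_const_mul]
    exact integral_congr_ae (Eventually.of_forall fun Z => (hg_im Z).symm)
  rw [this]
  have him := integral_im hg_int
  simp only [RCLike.im_to_complex] at him
  rw [him, hIg]
end

section
/- (Fjortoft's criterion.) Let U : [0,∞) → ℝ be twice continuously differentiable with U'' bounded, α > 0, and c ∈ ℂ with Im c > 0. Suppose φ : [0,∞) → ℂ is a twice continuously differentiable solution of the Rayleigh equation (U − c)(φ'' − α²φ) = U''φ on (0,∞) with φ(0) = 0, φ(Z) → 0 as Z → ∞, φ, φ' ∈ L²(0,∞), φ'(Z)·conj(φ(Z)) → 0 as Z → ∞, and φ is not identically zero. Then for every point z_c ∈ [0,∞) with U''(z_c) = 0, there exists a point z ∈ (0,∞) where U''(z)(U(z) − U(z_c)) < 0. That is, a necessary condition for instability is that U''·(U − U(z_c)) be negative somewhere in the flow, where z_c is a point at which U'' vanishes. -/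
open MeasureTheory Filter Set

/-- **Fjortoft's criterion.** For a nonzero unstable Rayleigh mode (`Im c > 0`),
for every point `z_c ≥ 0` with `U''(z_c) = 0` there is a point `z > 0` where
`U''(z)(U(z) - U(z_c)) < 0`. -/
theorem fjortoft_criterion
    (U : ℝ → ℝ) (α : ℝ) (c : ℂ) (φ : ℝ → ℂ)
    (hU : ContDiff ℝ 2 U)
    (hU2 : ∃ M : ℝ, ∀ Z : ℝ, 0 ≤ Z → |deriv (deriv U) Z| ≤ M)
    (hα : 0 < α)
    (hφ : ContDiff ℝ 2 φ)
    (hray : ∀ Z ∈ Ioi (0:ℝ),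
      (Complex.ofReal (U Z) - c) * (deriv (deriv φ) Z - (α : ℂ)^2 * φ Z)
        = Complex.ofReal (deriv (deriv U) Z) * φ Z)
    (hφ0 : φ 0 = 0)
    (hφ_inf : Tendsto φ atTop (nhds 0))
    (hφL2 : IntegrableOn (fun Z => ‖φ Z‖^2) (Ioi 0))
    (hφdL2 : IntegrableOn (fun Z => ‖deriv φ Z‖^2) (Ioi 0))
    (hcross : Tendsto (fun Z => deriv φ Z * (starRingEnd ℂ) (φ Z)) atTop (nhds 0))
    (hc : 0 < c.im)
    (hφne : ∃ Z : ℝ, 0 ≤ Z ∧ φ Z ≠ 0) :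
    ∀ zc : ℝ, 0 ≤ zc → deriv (deriv U) zc = 0 →
      ∃ z : ℝ, 0 < z ∧ deriv (deriv U) z * (U z - U zc) < 0 := by
  intro zc hzc hzc2
  by_contra hcon
  push_neg at hcon
  obtain ⟨M, hM⟩ := hU2
  have hM0 : 0 ≤ M := le_trans (abs_nonneg _) (hM 0 le_rfl)
  -- basic regularity facts
  have hUc : Continuous U := hU.continuous
  have hu2c : Continuous (deriv (deriv U)) := by
    have h1 : ContDiff ℝ (1+1 : WithTop ℕ∞) U := by rw [one_add_one_eq_two]; exact hU
    have h2 := (contDiff_succ_iff_deriv.mp h1).2.2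
    have h3 : ContDiff ℝ (0+1 : WithTop ℕ∞) (deriv U) := by rw [zero_add]; exact h2
    exact ((contDiff_succ_iff_deriv.mp h3).2.2).continuous
  have hφc : Continuous φ := hφ.continuous
  have hφd : Differentiable ℝ φ := hφ.differentiable (by norm_num)
  have hφ1 : ContDiff ℝ 1 (deriv φ) := by
    have h1 : ContDiff ℝ (1+1 : WithTop ℕ∞) φ := by rw [one_add_one_eq_two]; exact hφ
    exact (contDiff_succ_iff_deriv.mp h1).2.2
  have hφdc : Continuous (deriv φ) := hφ1.continuous
  have hφdd : Differentiable ℝ (deriv φ) := hφ1.differentiable one_ne_zero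
  -- denominator is nonzero
  have hden : ∀ Z : ℝ, ((U Z : ℂ) - c) ≠ 0 := by
    intro Z h
    have him : ((U Z : ℂ) - c).im = 0 := by rw [h]; simp
    simp only [Complex.sub_im, Complex.ofReal_im, zero_sub, neg_eq_zero] at him
    linarith
  have hdenpos : ∀ Z : ℝ, 0 < Complex.normSq ((U Z : ℂ) - c) :=
    fun Z => Complex.normSq_pos.mpr (hden Z)
  have hdennorm : ∀ Z : ℝ, c.im ≤ ‖(U Z : ℂ) - c‖ := by
    intro Z
    calc c.im = |((U Z : ℂ) - c).im| := by
          simp only [Complex.sub_im, Complex.ofReal_im, zero_sub, abs_neg]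
          exact (abs_of_pos hc).symm
      _ ≤ ‖(U Z : ℂ) - c‖ := Complex.abs_im_le_norm _
      _ = ‖(U Z : ℂ) - c‖ := rfl
  -- q and f := q * ‖φ‖²
  set q : ℝ → ℂ := fun Z => Complex.ofReal (deriv (deriv U) Z) / ((U Z : ℂ) - c) with hqdef
  have hqc : Continuous q :=
    (Complex.continuous_ofReal.comp hu2c).div
      ((Complex.continuous_ofReal.comp hUc).sub continuous_const) hden
  set f : ℝ → ℂ := fun Z => q Z * ((‖φ Z‖^2 : ℝ) : ℂ) with hfdef
  have hfint : IntegrableOn f (Ioi 0) := by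
    apply Integrable.mono' (hφL2.const_mul (M / c.im))
    · exact (hqc.mul (Complex.continuous_ofReal.comp
        ((hφc.norm).pow 2))).aestronglyMeasurable.restrict
    · rw [ae_restrict_iff' measurableSet_Ioi]
      filter_upwards with Z hZ
      have hq2 : ‖q Z‖ ≤ M / c.im := by
        rw [hqdef]
        simp only [norm_div, Complex.norm_real]
        exact div_le_div₀ hM0 (hM Z hZ.le) hc (hdennorm Z)
      calc ‖f Z‖ = ‖q Z‖ * ‖φ Z‖^2 := by
            rw [hfdef]
            simp only [norm_mul, Complex.norm_real, norm_pow, norm_norm,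
              Real.norm_eq_abs, abs_norm]
        _ ≤ M / c.im * ‖φ Z‖^2 := by
            apply mul_le_mul_of_nonneg_right hq2 (sq_nonneg _)
  -- φ'' conj φ equals G := α²‖φ‖² + f on Ioi 0
  have hmulconj : ∀ Z : ℝ, φ Z * (starRingEnd ℂ) (φ Z) = ((‖φ Z‖^2 : ℝ) : ℂ) := by
    intro Z
    rw [Complex.mul_conj]
    norm_cast
    rw [Complex.sq_norm]
  have hG : ∀ Z ∈ Ioi (0:ℝ),
      deriv (deriv φ) Z * (starRingEnd ℂ) (φ Z)
        = (α:ℂ)^2 * ((‖φ Z‖^2 : ℝ) : ℂ) + f Z := by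
    intro Z hZ
    have h := hray Z hZ
    have hd := hden Z
    have h2 : q Z * φ Z = deriv (deriv φ) Z - (α:ℂ)^2 * φ Z := by
      simp only [hqdef]
      rw [div_mul_eq_mul_div, div_eq_iff hd]
      linear_combination -h
    have h3 : deriv (deriv φ) Z = (α:ℂ)^2 * φ Z + q Z * φ Z := by
      rw [h2]; ring
    rw [h3, add_mul, mul_assoc, mul_assoc, hmulconj Z]
  -- integrability of φ'' conj φ on Ioi 0
  have hGint : IntegrableOn
      (fun Z => deriv (deriv φ) Z * (starRingEnd ℂ) (φ Z)) (Ioi 0) := by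
    apply IntegrableOn.congr_fun ?_ (fun Z hZ => (hG Z hZ).symm) measurableSet_Ioi
    exact ((hφL2.ofReal.const_mul ((α:ℂ)^2)).add hfint)
  have hd2int : IntegrableOn
      (fun Z => ((‖deriv φ Z‖^2 : ℝ) : ℂ)) (Ioi 0) := hφdL2.ofReal
  -- integration by parts
  have hF' : ∀ Z : ℝ, HasDerivAt (fun Z => deriv φ Z * (starRingEnd ℂ) (φ Z))
      (deriv (deriv φ) Z * (starRingEnd ℂ) (φ Z) + ((‖deriv φ Z‖^2 : ℝ) : ℂ)) Z := by
    intro Z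
    have h1 : HasDerivAt (fun x => (starRingEnd ℂ) (φ x)) ((starRingEnd ℂ) (deriv φ Z)) Z := by
      simpa only [starRingEnd_apply] using ((hφd Z).hasDerivAt).star
    have h2 := ((hφdd Z).hasDerivAt).mul h1
    have h3 : deriv φ Z * (starRingEnd ℂ) (deriv φ Z) = ((‖deriv φ Z‖^2 : ℝ) : ℂ) := by
      rw [Complex.mul_conj]
      norm_cast
      rw [Complex.sq_norm]
    rw [← h3]
    exact h2
  have hIBP : ∫ Z in Ioi (0:ℝ),
      (deriv (deriv φ) Z * (starRingEnd ℂ) (φ Z) + ((‖deriv φ Z‖^2 : ℝ) : ℂ)) = 0 := by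
    have := integral_Ioi_of_hasDerivAt_of_tendsto
      (f := fun Z => deriv φ Z * (starRingEnd ℂ) (φ Z))
      (f' := fun Z => deriv (deriv φ) Z * (starRingEnd ℂ) (φ Z) + ((‖deriv φ Z‖^2 : ℝ) : ℂ))
      (a := 0) (m := 0)
      ((hφdc.mul (Complex.continuous_conj.comp hφc)).continuousWithinAt)
      (fun x _ => hF' x) (hGint.add hd2int) hcross
    rw [this]
    simp [hφ0]
  -- the main integral identities
  set A : ℝ := ∫ Z in Ioi (0:ℝ), ‖φ Z‖^2 with hAdef
  set B : ℝ := ∫ Z in Ioi (0:ℝ), ‖deriv φ Z‖^2 with hBdef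
  have hA0 : 0 < A := by
    rw [hAdef]
    rw [setIntegral_pos_iff_support_of_nonneg_ae]
    · obtain ⟨z₀, hz₀0, hz₀⟩ := hφne
      have hz₀pos : 0 < z₀ := by
        rcases lt_or_eq_of_le hz₀0 with h | h
        · exact h
        · exact absurd (h ▸ hφ0) hz₀
      have hopen : IsOpen ({z : ℝ | φ z ≠ 0} ∩ Ioi 0) :=
        ((isOpen_compl_iff.mpr isClosed_singleton).preimage hφc).inter isOpen_Ioi
      have hsub : ({z : ℝ | φ z ≠ 0} ∩ Ioi 0)
          ⊆ Function.support (fun Z => ‖φ Z‖^2) ∩ Ioi 0 := by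
        rintro z ⟨hz1, hz2⟩
        refine ⟨?_, hz2⟩
        simp only [Function.mem_support]
        exact pow_ne_zero 2 (norm_ne_zero_iff.mpr hz1)
      calc (0:ENNReal) < volume ({z : ℝ | φ z ≠ 0} ∩ Ioi 0) :=
            hopen.measure_pos volume ⟨z₀, hz₀, hz₀pos⟩
        _ ≤ _ := measure_mono hsub
    · filter_upwards with Z using sq_nonneg _
    · exact hφL2
  have hB0 : 0 ≤ B := setIntegral_nonneg measurableSet_Ioi (fun _ _ => sq_nonneg _)
  -- ∫ f = -(B + α² A)
  have hφco : IntegrableOn (fun Z => ((‖φ Z‖^2 : ℝ) : ℂ)) (Ioi 0) := hφL2.ofReal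
  have hAco : ∫ Z in Ioi (0:ℝ), ((‖φ Z‖^2 : ℝ) : ℂ) = ((A : ℝ) : ℂ) := by
    rw [hAdef]; exact integral_ofReal
  have hBco : ∫ Z in Ioi (0:ℝ), ((‖deriv φ Z‖^2 : ℝ) : ℂ) = ((B : ℝ) : ℂ) := by
    rw [hBdef]; exact integral_ofReal
  have hfval : ∫ Z in Ioi (0:ℝ), f Z = -(((B + α^2 * A : ℝ)) : ℂ) := by
    have hsplit : ∫ Z in Ioi (0:ℝ),
        (deriv (deriv φ) Z * (starRingEnd ℂ) (φ Z) + ((‖deriv φ Z‖^2 : ℝ) : ℂ))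
        = (∫ Z in Ioi (0:ℝ), deriv (deriv φ) Z * (starRingEnd ℂ) (φ Z))
          + ∫ Z in Ioi (0:ℝ), ((‖deriv φ Z‖^2 : ℝ) : ℂ) :=
      integral_add hGint hd2int
    have hGval : ∫ Z in Ioi (0:ℝ), deriv (deriv φ) Z * (starRingEnd ℂ) (φ Z)
        = ((α:ℂ)^2 * ((A:ℝ) : ℂ)) + ∫ Z in Ioi (0:ℝ), f Z := by
      rw [setIntegral_congr_fun measurableSet_Ioi hG,
        integral_add (hφco.const_mul ((α:ℂ)^2)) hfint, integral_const_mul, hAco]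
    rw [hsplit, hGval, hBco] at hIBP
    have hstep : ∫ Z in Ioi (0:ℝ), f Z
        = -(((B:ℝ) : ℂ)) - (α:ℂ)^2 * ((A:ℝ) : ℂ) := by linear_combination hIBP
    rw [hstep]
    push_cast
    ring
  -- real and imaginary parts
  have hre : ∫ Z in Ioi (0:ℝ), (f Z).re = -(B + α^2 * A) := by
    have h1 : ∫ Z in Ioi (0:ℝ), (f Z).re = (∫ Z in Ioi (0:ℝ), f Z).re := by
      simpa only [RCLike.re_to_complex] using integral_re hfint
    rw [h1, hfval, Complex.neg_re, Complex.ofReal_re]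
  have him : ∫ Z in Ioi (0:ℝ), (f Z).im = 0 := by
    have h1 : ∫ Z in Ioi (0:ℝ), (f Z).im = (∫ Z in Ioi (0:ℝ), f Z).im := by
      simpa only [RCLike.im_to_complex] using integral_im hfint
    rw [h1, hfval, Complex.neg_im, Complex.ofReal_im, neg_zero]
  -- the Fjortoft combination
  set k : ℝ := (c.re - U zc) / c.im with hkdef
  have hfre : IntegrableOn (fun Z => (f Z).re) (Ioi 0) := by
    have := hfint.re
    simpa only [RCLike.re_to_complex, IntegrableOn] using this
  have hfim : IntegrableOn (fun Z => (f Z).im) (Ioi 0) := by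
    have := hfint.im
    simpa only [RCLike.im_to_complex, IntegrableOn] using this
  have hcomb : ∫ Z in Ioi (0:ℝ), ((f Z).re + k * (f Z).im) = -(B + α^2 * A) := by
    rw [integral_add hfre (hfim.const_mul k), integral_const_mul, hre, him]
    ring
  -- pointwise nonnegativity of the combination
  have hnonneg : ∀ Z ∈ Ioi (0:ℝ), 0 ≤ (f Z).re + k * (f Z).im := by
    intro Z hZ
    have hD := hdenpos Z
    have hfre' : (f Z).re = deriv (deriv U) Z * (U Z - c.re)
        / Complex.normSq ((U Z : ℂ) - c) * ‖φ Z‖^2 := by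
      simp only [hfdef, hqdef, Complex.mul_re, Complex.mul_im, Complex.ofReal_re,
        Complex.ofReal_im, Complex.div_re, Complex.div_im, Complex.sub_re, Complex.sub_im,
        mul_zero, zero_mul, sub_zero, add_zero, zero_sub, zero_div, neg_zero, zero_add]
      try ring
    have hfim' : (f Z).im = deriv (deriv U) Z * c.im
        / Complex.normSq ((U Z : ℂ) - c) * ‖φ Z‖^2 := by
      simp only [hfdef, hqdef, Complex.mul_re, Complex.mul_im, Complex.ofReal_re,
        Complex.ofReal_im, Complex.div_re, Complex.div_im, Complex.sub_re, Complex.sub_im,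
        mul_zero, zero_mul, sub_zero, add_zero, zero_sub, zero_div, neg_zero, zero_add]
      try ring
    have hkey : (f Z).re + k * (f Z).im
        = deriv (deriv U) Z * (U Z - U zc) * (‖φ Z‖^2 / Complex.normSq ((U Z : ℂ) - c)) := by
      rw [hfre', hfim', hkdef]
      field_simp
      ring
    rw [hkey]
    exact mul_nonneg (hcon Z hZ) (by positivity)
  -- contradiction
  have hge : (0:ℝ) ≤ ∫ Z in Ioi (0:ℝ), ((f Z).re + k * (f Z).im) :=
    setIntegral_nonneg measurableSet_Ioi hnonneg
  rw [hcomb] at hge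
  nlinarith [mul_pos (pow_pos hα 2) hA0, hB0]
end
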